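/- Let P = (p(x,y))_{x,y∈X} be an irreducible stochastic matrix on a countable set X which is reversible with respect to a function v : X → (0,∞), i.e. v(x)p(x,y) = v(y)p(y,x) for all x,y. Let d be the graph distance associated with the adjacency relation x ~ y ⇔ p(x,y) > 0 (symmetric by reversibility), and let B_n(x) = {y ∈ X : d(x,y) ≤ n}. Then for every x ∈ X and every n ≥ 0, p^{(2n)}(x,x) ≥ v(x) / ∑_{y ∈ B_n(x)} v(y) (where the right-hand side is interpreted as 0 if the sum diverges). -/

import Mathlib

open Filter MeasureTheory ProbabilityTheory
open scoped ENNReal NNReal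

/-- `n`-step weights (matrix powers) of a weight kernel `μ` on a countable set. -/
noncomputable def matPow {X : Type*} [DecidableEq X] (μ : X → X → ℝ≥0∞) :
    ℕ → X → X → ℝ≥0∞
  | 0, x, y => if x = y then 1 else 0
  | n + 1, x, y => ∑' z, matPow μ n x z * μ z y

/-- `(X, μ)` has bounded row sums. -/
def bddRows {X : Type*} (μ : X → X → ℝ≥0∞) : Prop :=
  ∃ K : ℝ≥0∞, K ≠ ⊤ ∧ ∀ x, ∑' y, μ x y ≤ K

/-- `(X, μ)` is connected. -/
def connectedW {X : Type*} [DecidableEq X] (μ : X → X → ℝ≥0∞) : Prop :=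
  ∀ x y, ∃ n, 0 < n ∧ 0 < matPow μ n x y

/-- `limsup_n (μ^{(n)}(x,y))^{1/n}`, the reciprocal of the convergence parameter. -/
noncomputable def lsRoot {X : Type*} [DecidableEq X] (μ : X → X → ℝ≥0∞) (x y : X) : ℝ≥0∞ :=
  Filter.limsup (fun n : ℕ => matPow μ n x y ^ (n : ℝ)⁻¹) Filter.atTop

/-- The convergence parameter `R = 1 / limsup_n (μ^{(n)}(x,y))^{1/n}`. -/
noncomputable def convR {X : Type*} [DecidableEq X] (μ : X → X → ℝ≥0∞) (x y : X) : ℝ≥0∞ :=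
  (lsRoot μ x y)⁻¹

open Classical in
/-- Restriction of a weight kernel to a subset (extended by `0`). -/
noncomputable def restrictW {X : Type*} (μ : X → X → ℝ≥0∞) (A : Set X) : X → X → ℝ≥0∞ :=
  fun x y => if x ∈ A ∧ y ∈ A then μ x y else 0
section aux
variable {X : Type*} [DecidableEq X] (μ : X → X → ℝ≥0∞)

lemma matPow_zero (x y : X) : matPow μ 0 x y = if x = y then 1 else 0 := rfl
lemma matPow_succ (n : ℕ) (x y : X) :
    matPow μ (n + 1) x y = ∑' z, matPow μ n x z * μ z y := rfl

lemma matPow_succ_left (n : ℕ) (x y : X) :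
    matPow μ (n + 1) x y = ∑' z, μ x z * matPow μ n z y := by
  induction n generalizing y with
  | zero =>
    rw [matPow_succ, tsum_eq_single x (by intro b hb; simp [matPow_zero, if_neg (Ne.symm hb)]),
      tsum_eq_single y (by intro b hb; simp [matPow_zero, if_neg hb])]
    simp [matPow_zero]
  | succ n ih =>
    rw [matPow_succ]
    calc ∑' z, matPow μ (n + 1) x z * μ z y
        = ∑' z, (∑' w, μ x w * matPow μ n w z) * μ z y := by
          exact tsum_congr fun z => by rw [ih]
      _ = ∑' z, ∑' w, μ x w * matPow μ n w z * μ z y := by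
          exact tsum_congr fun z => ENNReal.tsum_mul_right.symm
      _ = ∑' w, ∑' z, μ x w * matPow μ n w z * μ z y := ENNReal.tsum_comm
      _ = ∑' w, μ x w * ∑' z, matPow μ n w z * μ z y := by
          refine tsum_congr fun w => ?_
          rw [← ENNReal.tsum_mul_left]
          exact tsum_congr fun z => by ring
      _ = ∑' w, μ x w * matPow μ (n + 1) w y := by
          exact tsum_congr fun w => by rw [matPow_succ]

lemma matPow_add (m n : ℕ) (x y : X) :
    matPow μ (m + n) x y = ∑' z, matPow μ m x z * matPow μ n z y := by
  induction n generalizing y with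
  | zero =>
    rw [tsum_eq_single y (by intro b hb; simp [matPow_zero, if_neg hb])]
    simp [matPow_zero]
  | succ n ih =>
    rw [show m + (n + 1) = (m + n) + 1 from rfl, matPow_succ]
    calc ∑' z, matPow μ (m + n) x z * μ z y
        = ∑' z, (∑' w, matPow μ m x w * matPow μ n w z) * μ z y :=
          tsum_congr fun z => by rw [ih]
      _ = ∑' z, ∑' w, matPow μ m x w * matPow μ n w z * μ z y :=
          tsum_congr fun z => ENNReal.tsum_mul_right.symm
      _ = ∑' w, ∑' z, matPow μ m x w * matPow μ n w z * μ z y := ENNReal.tsum_comm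
      _ = ∑' w, matPow μ m x w * ∑' z, matPow μ n w z * μ z y := by
          refine tsum_congr fun w => ?_
          rw [← ENNReal.tsum_mul_left]
          exact tsum_congr fun z => by ring
      _ = ∑' w, matPow μ m x w * matPow μ (n + 1) w y :=
          tsum_congr fun w => by rw [matPow_succ]

lemma matPow_row_sum (h : ∀ x, ∑' y, μ x y = 1) (n : ℕ) (x : X) :
    ∑' y, matPow μ n x y = 1 := by
  induction n generalizing x with
  | zero =>
    rw [tsum_eq_single x (by intro b hb; simp [matPow_zero, if_neg (Ne.symm hb)])]
    simp [matPow_zero]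
  | succ n ih =>
    calc ∑' y, matPow μ (n + 1) x y = ∑' y, ∑' z, μ x z * matPow μ n z y :=
          tsum_congr fun y => matPow_succ_left μ n x y
      _ = ∑' z, ∑' y, μ x z * matPow μ n z y := ENNReal.tsum_comm
      _ = ∑' z, μ x z * ∑' y, matPow μ n z y := tsum_congr fun z => ENNReal.tsum_mul_left
      _ = ∑' z, μ x z := by simp [ih]
      _ = 1 := h x

lemma matPow_rev {v : X → ℝ≥0∞} (hrev : ∀ x y, v x * μ x y = v y * μ y x) (n : ℕ) (x y : X) :
    v x * matPow μ n x y = v y * matPow μ n y x := by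
  induction n generalizing x y with
  | zero =>
    by_cases h : x = y
    · subst h; rfl
    · simp [matPow_zero, if_neg h, if_neg (Ne.symm h)]
  | succ n ih =>
    calc v x * matPow μ (n + 1) x y = v x * ∑' z, matPow μ n x z * μ z y := by rw [matPow_succ]
      _ = ∑' z, v x * matPow μ n x z * μ z y := by
          rw [← ENNReal.tsum_mul_left]; exact tsum_congr fun z => by ring
      _ = ∑' z, v z * matPow μ n z x * μ z y := tsum_congr fun z => by rw [ih]
      _ = ∑' z, matPow μ n z x * (v z * μ z y) := tsum_congr fun z => by ring
      _ = ∑' z, matPow μ n z x * (v y * μ y z) := tsum_congr fun z => by rw [hrev]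
      _ = v y * ∑' z, μ y z * matPow μ n z x := by
          rw [← ENNReal.tsum_mul_left]; exact tsum_congr fun z => by ring
      _ = v y * matPow μ (n + 1) y x := by rw [matPow_succ_left]

end aux

lemma tsum_cauchy_schwarz {α : Type*} (f g : α → ℝ≥0∞) :
    ∑' a, f a * g a ≤
      (∑' a, f a ^ (2 : ℝ)) ^ (2⁻¹ : ℝ) * (∑' a, g a ^ (2 : ℝ)) ^ (2⁻¹ : ℝ) := by
  letI : MeasurableSpace α := ⊤
  haveI : MeasurableSingletonClass α := ⟨fun _ => trivial⟩
  have h := ENNReal.lintegral_mul_le_Lp_mul_Lq (Measure.count : Measure α)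
    (p := 2) (q := 2) Real.HolderConjugate.two_two
    (measurable_from_top (f := f)).aemeasurable (measurable_from_top (f := g)).aemeasurable
  simp only [Pi.mul_apply, lintegral_count, one_div] at h
  exact h

lemma half_half (x : ℝ≥0∞) : x ^ (2⁻¹ : ℝ) * x ^ (2⁻¹ : ℝ) = x := by
  rw [← pow_two, ← ENNReal.rpow_natCast (x ^ (2⁻¹ : ℝ)) 2, ← ENNReal.rpow_mul]
  norm_num


lemma rpow_half_sq (x : ℝ≥0∞) : (x ^ (2⁻¹ : ℝ)) ^ (2 : ℝ) = x := by
  rw [← ENNReal.rpow_mul]; norm_num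

lemma rpow_two' (x : ℝ≥0∞) : x ^ (2 : ℝ) = x * x := by
  rw [show ((2:ℝ)) = ((2:ℕ) : ℝ) from by norm_num, ENNReal.rpow_natCast, pow_two]

/-- Lemma 6.2 of [CGZ]: for an irreducible stochastic kernel `p` reversible
with respect to `v`, the return probabilities satisfy
`p^{(2n)}(x,x) ≥ v(x) / v(B_n(x))`, where `B_n(x)` is the ball of radius `n` in the
graph distance (a vertex `y` is at distance `≤ n` from `x` iff some `p^{(k)}(x,y) > 0`
with `k ≤ n`), the right-hand side being `0` when the sum diverges. -/
theorem reversible_return_probability_lower_bound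
    {X : Type*} [Countable X] [DecidableEq X]
    (p : X → X → ℝ≥0∞)
    (hstoch : ∀ x, ∑' y, p x y = 1)
    (hirr : connectedW p)
    (v : X → ℝ≥0∞) (hv0 : ∀ x, 0 < v x) (hvtop : ∀ x, v x ≠ ⊤)
    (hrev : ∀ x y, v x * p x y = v y * p y x) :
    ∀ (x : X) (n : ℕ),
      v x / (∑' y : {y : X // ∃ k ≤ n, 0 < matPow p k x y}, v y.1) ≤
        matPow p (2 * n) x x := by
  intro x n
  set P : X → Prop := fun y => ∃ k ≤ n, 0 < matPow p k x y with hP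
  set m : X → ℝ≥0∞ := fun y => matPow p n y x with hm
  set M : ℝ≥0∞ := matPow p (2 * n) x x with hM
  set S : ℝ≥0∞ := ∑' y : {y : X // P y}, v y.1 with hS
  -- membership from nonvanishing of m
  have hsupp : ∀ y : X, m y ≠ 0 → P y := by
    intro y hy
    refine ⟨n, le_refl n, ?_⟩
    have h1 : v y * m y ≠ 0 := mul_ne_zero (hv0 y).ne' hy
    have h2 : v x * matPow p n x y ≠ 0 := by
      rw [matPow_rev p hrev n x y]; exact h1
    exact pos_iff_ne_zero.mpr fun h => h2 (by rw [h, mul_zero])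
  have h1full : ∑' y, v y * m y = v x := by
    calc ∑' y, v y * m y = ∑' y, v x * matPow p n x y :=
          tsum_congr fun y => (matPow_rev p hrev n x y).symm
      _ = v x * ∑' y, matPow p n x y := ENNReal.tsum_mul_left
      _ = v x := by rw [matPow_row_sum p hstoch n x, mul_one]
  have h2full : ∑' y, v y * (m y * m y) = v x * M := by
    calc ∑' y, v y * (m y * m y) = ∑' y, v x * matPow p n x y * m y :=
          tsum_congr fun y => by rw [← mul_assoc, matPow_rev p hrev n x y]
      _ = v x * ∑' y, matPow p n x y * matPow p n y x := by
          rw [← ENNReal.tsum_mul_left]; exact tsum_congr fun y => by ring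
      _ = v x * M := by rw [hM, two_mul, matPow_add]
  -- Cauchy–Schwarz over the ball
  have hcs := tsum_cauchy_schwarz (fun y : {y : X // P y} => (v y.1) ^ (2⁻¹ : ℝ))
      (fun y : {y : X // P y} => (v y.1) ^ (2⁻¹ : ℝ) * m y.1)
  have hfg : ∑' y : {y : X // P y}, (v y.1) ^ (2⁻¹ : ℝ) * ((v y.1) ^ (2⁻¹ : ℝ) * m y.1)
      = v x := by
    have : ∀ y : {y : X // P y}, (v y.1) ^ (2⁻¹ : ℝ) * ((v y.1) ^ (2⁻¹ : ℝ) * m y.1)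
        = v y.1 * m y.1 := fun y => by rw [← mul_assoc, half_half]
    rw [tsum_congr this]
    have hss : Function.support (fun y => v y * m y) ⊆ {y : X | P y} := by
      intro y hy
      have hy' : v y * m y ≠ 0 := hy
      exact hsupp y fun h => hy' (by rw [h, mul_zero])
    exact (tsum_subtype_eq_of_support_subset hss).trans h1full
  have hf2 : ∑' y : {y : X // P y}, ((v y.1) ^ (2⁻¹ : ℝ)) ^ (2 : ℝ) = S := by
    exact tsum_congr fun y => rpow_half_sq _
  have hg2 : ∑' y : {y : X // P y}, ((v y.1) ^ (2⁻¹ : ℝ) * m y.1) ^ (2 : ℝ) = v x * M := by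
    have : ∀ y : {y : X // P y}, ((v y.1) ^ (2⁻¹ : ℝ) * m y.1) ^ (2 : ℝ)
        = v y.1 * (m y.1 * m y.1) := by
      intro y
      rw [ENNReal.mul_rpow_of_nonneg _ _ (by norm_num : (0:ℝ) ≤ 2), rpow_half_sq, rpow_two']
    rw [tsum_congr this]
    have hss : Function.support (fun y => v y * (m y * m y)) ⊆ {y : X | P y} := by
      intro y hy
      refine hsupp y fun h => hy ?_
      simp only [Function.mem_support, ne_eq, not_not] at *
      rw [h, mul_zero, mul_zero]
    exact (tsum_subtype_eq_of_support_subset hss).trans h2full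
  rw [hfg, hf2, hg2] at hcs
  have hsq : v x * v x ≤ v x * (M * S) := by
    calc v x * v x ≤ (S ^ (2⁻¹:ℝ) * (v x * M) ^ (2⁻¹:ℝ)) * (S ^ (2⁻¹:ℝ) * (v x * M) ^ (2⁻¹:ℝ)) :=
          mul_le_mul' hcs hcs
      _ = (S ^ (2⁻¹:ℝ) * S ^ (2⁻¹:ℝ)) * ((v x * M) ^ (2⁻¹:ℝ) * (v x * M) ^ (2⁻¹:ℝ)) :=
          mul_mul_mul_comm _ _ _ _
      _ = S * (v x * M) := by rw [half_half, half_half]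
      _ = v x * (M * S) := by ring
  have hle : v x ≤ M * S :=
    (ENNReal.mul_le_mul_iff_right (hv0 x).ne' (hvtop x)).mp hsq
  exact ENNReal.div_le_of_le_mul hle
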